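/- For every n ≥ 0, the limit lim_{a→∞} (2/a)^{n/2} c_n^a(√(2a)·x + a) = H_n(x)/n! holds uniformly on compact subsets of ℝ, where H_n is the Hermite polynomial of degree n. -/

import Mathlib

/-- The Charlier polynomial `c_n^a(x)`. -/
noncomputable def charlierFn (a : ℝ) (n : ℕ) (x : ℝ) : ℝ :=
  (n.factorial : ℝ)⁻¹ *
    ∑ j ∈ Finset.range (n + 1),
      (-a) ^ (n - j) * (n.choose j : ℝ) * ∏ i ∈ Finset.range j, (x - (i : ℝ))

/-- The Hermite polynomial `H_n(x) = n! ∑_{j=0}^{⌊n/2⌋} (-1)^j (2x)^{n-2j}/(j!(n-2j)!)`. -/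
noncomputable def hermiteFn (n : ℕ) (x : ℝ) : ℝ :=
  (n.factorial : ℝ) *
    ∑ j ∈ Finset.range (n / 2 + 1),
      (-1 : ℝ) ^ j * (2 * x) ^ (n - 2 * j) / ((j.factorial : ℝ) * ((n - 2 * j).factorial : ℝ))

/- ### Auxiliary definitions -/

lemma nat_choose_id (n j : ℕ) :
    (n+1) * (n+1).choose j = j * (n+1).choose j + (n+1) * n.choose j := by
  cases j with
  | zero => simp
  | succ k =>
      have h1 : (k+1) * (n+1).choose (k+1) = (n+1) * n.choose k := by
        rw [mul_comm]
        exact (Nat.add_one_mul_choose_eq n k).symm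
      rw [h1, Nat.choose_succ_succ, Nat.mul_add]

noncomputable def S (a : ℝ) (m : ℕ) (x : ℝ) : ℝ :=
  ∑ j ∈ Finset.range (m + 1),
      (-a) ^ (m - j) * (m.choose j : ℝ) * ∏ i ∈ Finset.range j, (x - (i : ℝ))

noncomputable def Pf (x : ℝ) (j : ℕ) : ℝ := ∏ i ∈ Finset.range j, (x - (i:ℝ))

noncomputable def CcF (a x : ℝ) (n j : ℕ) : ℝ :=
  (-a)^(n+2-j) * (((n+1).choose (j-1) : ℕ) : ℝ) * Pf x j

noncomputable def wF (a : ℝ) (n j : ℕ) : ℝ :=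
  (-a)^(n+1-j) * (((n+1).choose j : ℕ):ℝ) * ((j:ℝ) - ((n:ℝ)+1) - a)
      - ((n:ℝ)+1) * a * ((-a)^(n-j) * ((n.choose j : ℕ):ℝ))

noncomputable def T (m : ℕ) (x : ℝ) : ℝ :=
  ∑ j ∈ Finset.range (m / 2 + 1),
      (-1 : ℝ) ^ j * (2 * x) ^ (m - 2 * j) / ((j.factorial : ℝ) * ((m - 2 * j).factorial : ℝ))

noncomputable def gF (n : ℕ) (a x : ℝ) : ℝ :=
  (2 / a) ^ ((n : ℝ) / 2) * charlierFn a n (Real.sqrt (2 * a) * x + a)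

noncomputable def hF (n : ℕ) (x : ℝ) : ℝ := hermiteFn n x / (n.factorial : ℝ)

/- ### The Charlier three-term recurrence -/

lemma key_term (a x : ℝ) (n k : ℕ) (hj : k + 1 < n + 3) :
    (-a)^(n+2-(k+1)) * (((n+2).choose (k+1) : ℕ):ℝ) * Pf x (k+1)
      - (CcF a x n (k+1) + wF a n (k+1) * Pf x (k+1)) = 0 := by
  rcases Nat.lt_or_ge k n with hk | hk
  · obtain ⟨m, rfl⟩ : ∃ m, n = k + 1 + m := ⟨n - (k+1), by omega⟩
    have q1 : k + 1 + m + 2 - (k+1) = m + 2 := by omega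
    have q2 : k + 1 + m + 1 - (k+1) = m + 1 := by omega
    have q3 : k + 1 + m - (k+1) = m := by omega
    simp only [CcF, wF, q1, q2, q3, Nat.add_sub_cancel]
    have hPas : (((k+1+m+2).choose (k+1) : ℕ) : ℝ)
        = (((k+1+m+1).choose k : ℕ) : ℝ) + (((k+1+m+1).choose (k+1) : ℕ) : ℝ) := by
      exact_mod_cast congrArg Nat.cast (Nat.choose_succ_succ (k+1+m+1) k)
    have hId : ((k+1+m+1) : ℝ) * (((k+1+m+1).choose (k+1) : ℕ) : ℝ)
        = ((k+1):ℝ) * (((k+1+m+1).choose (k+1) : ℕ) : ℝ)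
          + ((k+1+m+1):ℝ) * (((k+1+m).choose (k+1) : ℕ) : ℝ) := by
      exact_mod_cast congrArg Nat.cast (nat_choose_id (k+1+m) (k+1))
    push_cast
    push_cast at hPas hId
    linear_combination ((-a)^(m+2) * Pf x (k+1)) * hPas - (a * (-a)^m * Pf x (k+1)) * hId
  · have : k = n ∨ k = n + 1 := by omega
    rcases this with rfl | rfl
    · have q1 : k + 2 - (k+1) = 1 := by omega
      have q2 : k + 1 - (k+1) = 0 := by omega
      have q3 : k - (k+1) = 0 := by omega
      have c1 : (k+2).choose (k+1) = k+2 := by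
        rw [show k+2 = (k+1)+1 from rfl, Nat.choose_succ_self_right]
      have c2 : (k+1).choose k = k+1 := Nat.choose_succ_self_right k
      have c3 : k.choose (k+1) = 0 := Nat.choose_succ_self k
      simp only [CcF, wF, q1, q2, q3, Nat.add_sub_cancel, c1, c2, c3,
        Nat.choose_self, Nat.cast_zero]
      push_cast
      ring
    · have c1 : (n+2).choose (n+2) = 1 := Nat.choose_self _
      have c2 : (n+1).choose (n+2) = 0 := Nat.choose_eq_zero_of_lt (by omega)
      have c3 : n.choose (n+2) = 0 := Nat.choose_eq_zero_of_lt (by omega)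
      have c4 : (n+1).choose (n+1) = 1 := Nat.choose_self _
      have q3 : n + 2 - (n + 1 + 1) = 0 := by omega
      have q4 : n + 1 - (n + 1 + 1) = 0 := by omega
      have q5 : n - (n + 1 + 1) = 0 := by omega
      simp only [CcF, wF, Nat.add_sub_cancel, q3, q4, q5,
        show n+1+1-1 = n+1 from rfl, show ((n+1+1):ℕ) = n+2 from rfl, c1, c2, c3, c4]
      push_cast
      ring

lemma S_rec (a x : ℝ) (n : ℕ) :
    S a (n+2) x = (x - ((n:ℝ)+1) - a) * S a (n+1) x - ((n:ℝ)+1) * a * S a n x := by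
  have hPsucc : ∀ j : ℕ, Pf x (j+1) = (x - j) * Pf x j := by
    intro j
    simp only [Pf, Finset.prod_range_succ]
    ring
  have h1 : (x - ((n:ℝ)+1) - a) * S a (n+1) x
      = (∑ j ∈ Finset.range (n+2), (-a)^(n+1-j) * (((n+1).choose j : ℕ):ℝ) * Pf x (j+1))
        + ∑ j ∈ Finset.range (n+2),
            (-a)^(n+1-j) * (((n+1).choose j : ℕ):ℝ) * ((j:ℝ) - ((n:ℝ)+1) - a) * Pf x j := by
    rw [S, Finset.mul_sum, ← Finset.sum_add_distrib]
    refine Finset.sum_congr rfl ?_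
    intro j _
    rw [hPsucc j]
    simp only [Pf]
    ring
  have h2 : ∑ j ∈ Finset.range (n+2), (-a)^(n+1-j) * (((n+1).choose j : ℕ):ℝ) * Pf x (j+1)
      = (∑ j ∈ Finset.range (n+3), CcF a x n j) - CcF a x n 0 := by
    rw [Finset.sum_range_succ' (CcF a x n) (n+2)]
    have : ∀ j ∈ Finset.range (n+2),
        CcF a x n (j+1) = (-a)^(n+1-j) * (((n+1).choose j : ℕ):ℝ) * Pf x (j+1) := by
      intro j _
      simp only [CcF, Nat.succ_sub_succ, Nat.add_sub_cancel, Nat.sub_zero]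
    rw [Finset.sum_congr rfl this]
    ring
  have h3 : (∑ j ∈ Finset.range (n+2),
        (-a)^(n+1-j) * (((n+1).choose j : ℕ):ℝ) * ((j:ℝ) - ((n:ℝ)+1) - a) * Pf x j)
      - ((n:ℝ)+1) * a * S a n x = ∑ j ∈ Finset.range (n+3), wF a n j * Pf x j := by
    have e1 : ∑ j ∈ Finset.range (n+3),
        (-a)^(n+1-j) * (((n+1).choose j : ℕ):ℝ) * ((j:ℝ) - ((n:ℝ)+1) - a) * Pf x j
        = ∑ j ∈ Finset.range (n+2),
        (-a)^(n+1-j) * (((n+1).choose j : ℕ):ℝ) * ((j:ℝ) - ((n:ℝ)+1) - a) * Pf x j := by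
      rw [Finset.sum_range_succ]
      simp [Nat.choose_eq_zero_of_lt]
    have e2 : ∑ j ∈ Finset.range (n+3),
        ((n:ℝ)+1) * a * ((-a)^(n-j) * (((n.choose j : ℕ)):ℝ) * Pf x j)
        = ∑ j ∈ Finset.range (n+1),
        ((n:ℝ)+1) * a * ((-a)^(n-j) * (((n.choose j : ℕ)):ℝ) * Pf x j) := by
      rw [Finset.sum_range_succ, Finset.sum_range_succ]
      simp [Nat.choose_eq_zero_of_lt]
    have hSn : S a n x = ∑ j ∈ Finset.range (n+1),
        (-a)^(n-j) * (((n.choose j : ℕ)):ℝ) * Pf x j := rfl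
    rw [hSn, Finset.mul_sum, ← e2, ← e1, ← Finset.sum_sub_distrib]
    refine Finset.sum_congr rfl ?_
    intro j _
    simp only [wF]
    ring
  have key : ∑ j ∈ Finset.range (n+3), ((-a)^(n+2-j) * (((n+2).choose j : ℕ):ℝ) * Pf x j
      - (CcF a x n j + wF a n j * Pf x j)) = - CcF a x n 0 := by
    rw [Finset.sum_eq_single_of_mem 0 (by simp)]
    · simp only [CcF, wF, Pf, Nat.sub_zero, Nat.choose_zero_right]
      simp only [Finset.range_zero, Finset.prod_empty, Nat.cast_one, Nat.cast_zero]
      ring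
    · intro j hj hne
      obtain ⟨k, rfl⟩ := Nat.exists_eq_succ_of_ne_zero hne
      simp only [Finset.mem_range] at hj
      exact key_term a x n k hj
  have hS2 : S a (n+2) x = ∑ j ∈ Finset.range (n+3),
      (-a)^(n+2-j) * (((n+2).choose j : ℕ):ℝ) * Pf x j := rfl
  have hsplit : ∑ j ∈ Finset.range (n+3), (CcF a x n j + wF a n j * Pf x j)
      = (∑ j ∈ Finset.range (n+3), CcF a x n j)
        + ∑ j ∈ Finset.range (n+3), wF a n j * Pf x j :=
    Finset.sum_add_distrib
  rw [Finset.sum_sub_distrib, hsplit] at key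
  rw [hS2, h1, h2]
  linarith [h3, key]

lemma charlier_rec (a x : ℝ) (n : ℕ) :
    ((n:ℝ)+2) * charlierFn a (n+2) x
      = (x - ((n:ℝ)+1) - a) * charlierFn a (n+1) x - a * charlierFn a n x := by
  have h := S_rec a x n
  have e0 : charlierFn a n x = ((n.factorial : ℕ):ℝ)⁻¹ * S a n x := rfl
  have e1 : charlierFn a (n+1) x = (((n+1).factorial : ℕ):ℝ)⁻¹ * S a (n+1) x := rfl
  have e2 : charlierFn a (n+2) x = (((n+2).factorial : ℕ):ℝ)⁻¹ * S a (n+2) x := rfl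
  have f1 : (((n+1).factorial : ℕ):ℝ) = ((n:ℝ)+1) * ((n.factorial : ℕ):ℝ) := by
    exact_mod_cast congrArg Nat.cast (Nat.factorial_succ n)
  have f2 : (((n+2).factorial : ℕ):ℝ) = ((n:ℝ)+2) * (((n+1).factorial : ℕ):ℝ) := by
    exact_mod_cast congrArg Nat.cast (Nat.factorial_succ (n+1))
  have nz0 : ((n.factorial : ℕ):ℝ) ≠ 0 := by exact_mod_cast n.factorial_ne_zero
  have nz1 : ((n:ℝ)+1) ≠ 0 := by positivity
  have nz2 : ((n:ℝ)+2) ≠ 0 := by positivity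
  rw [e0, e1, e2, h, f2, f1]
  field_simp

/- ### The Hermite three-term recurrence -/

lemma T_rec (x : ℝ) (n : ℕ) :
    ((n:ℝ)+2) * T (n+2) x = 2 * x * T (n+1) x - 2 * T n x := by
  rcases Nat.even_or_odd n with ⟨m, rfl⟩ | ⟨m, rfl⟩
  · have r1 : (m + m + 2) / 2 + 1 = m + 2 := by omega
    have r2 : (m + m + 1) / 2 + 1 = m + 1 := by omega
    have r3 : (m + m) / 2 + 1 = m + 1 := by omega
    simp only [T, r1, r2, r3]
    rw [Finset.mul_sum, Finset.sum_range_succ]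
    set B : ℕ → ℝ := fun j => (-1:ℝ)^j * (2*(j:ℝ)) * (2*x)^(m+m+2-2*j) /
      ((j.factorial : ℝ) * ((m+m+2-2*j).factorial : ℝ)) with hB
    have hsplit : ∀ j ∈ Finset.range (m+1),
        (((m+m:ℕ):ℝ) + 2) * ((-1:ℝ)^j * (2*x)^(m+m+2-2*j) /
            ((j.factorial : ℝ) * ((m+m+2-2*j).factorial : ℝ)))
        = 2*x * ((-1:ℝ)^j * (2*x)^(m+m+1-2*j) /
            ((j.factorial : ℝ) * ((m+m+1-2*j).factorial : ℝ))) + B j := by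
      intro j hj
      simp only [Finset.mem_range] at hj
      obtain ⟨i, rfl⟩ : ∃ i, m = j + i := ⟨m - j, by omega⟩
      have q1 : j + i + (j + i) + 2 - 2*j = 2*i+2 := by omega
      have q2 : j + i + (j + i) + 1 - 2*j = 2*i+1 := by omega
      simp only [hB, q1, q2]
      have hf : ((2*i+2).factorial : ℝ) = ((2*i:ℝ)+2) * ((2*i+1).factorial : ℝ) := by
        exact_mod_cast congrArg Nat.cast (Nat.factorial_succ (2*i+1))
      rw [hf]
      have h1 : (((2*i+1).factorial : ℕ) : ℝ) ≠ 0 := by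
        exact_mod_cast (2*i+1).factorial_ne_zero
      have h2 : ((j.factorial : ℕ) : ℝ) ≠ 0 := by exact_mod_cast j.factorial_ne_zero
      field_simp
      push_cast
      ring
    rw [Finset.sum_congr rfl hsplit, Finset.sum_add_distrib]
    have htop : (((m+m:ℕ):ℝ) + 2) * ((-1:ℝ)^(m+1) * (2*x)^(m+m+2-2*(m+1)) /
        (((m+1).factorial : ℝ) * ((m+m+2-2*(m+1)).factorial : ℝ))) = B (m+1) := by
      have q : m + m + 2 - 2*(m+1) = 0 := by omega
      simp only [hB, q]
      push_cast
      ring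
    rw [htop]
    have hBsum : (∑ j ∈ Finset.range (m+1), B j) + B (m+1)
        = ∑ j ∈ Finset.range (m+1), ((-2) * ((-1:ℝ)^j * (2*x)^(m+m-2*j) /
            ((j.factorial : ℝ) * ((m+m-2*j).factorial : ℝ)))) := by
      rw [← Finset.sum_range_succ, Finset.sum_range_succ' B (m+1)]
      have hB0 : B 0 = 0 := by simp [hB]
      rw [hB0, add_zero]
      refine Finset.sum_congr rfl ?_
      intro j hj
      have q1 : m + m + 2 - 2*(j+1) = m + m - 2*j := by omega
      simp only [hB, q1]
      have hf : (((j+1).factorial : ℕ) : ℝ) = ((j:ℝ)+1) * ((j.factorial : ℕ) : ℝ) := by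
        exact_mod_cast congrArg Nat.cast (Nat.factorial_succ j)
      rw [hf, pow_succ]
      have h2 : ((j.factorial : ℕ) : ℝ) ≠ 0 := by exact_mod_cast j.factorial_ne_zero
      have h3 : (((m+m-2*j).factorial : ℕ) : ℝ) ≠ 0 := by
        exact_mod_cast (m+m-2*j).factorial_ne_zero
      have hj1 : ((j:ℝ)+1) ≠ 0 := by positivity
      field_simp
      push_cast
      ring
    rw [add_assoc, hBsum, Finset.mul_sum, Finset.mul_sum, ← Finset.sum_sub_distrib,
      ← Finset.sum_add_distrib]
    exact Finset.sum_congr rfl (fun j _ => by ring)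
  · have r1 : (2*m+1 + 2) / 2 + 1 = m + 2 := by omega
    have r2 : (2*m+1 + 1) / 2 + 1 = m + 2 := by omega
    have r3 : (2*m+1) / 2 + 1 = m + 1 := by omega
    simp only [T, r1, r2, r3]
    rw [Finset.mul_sum]
    set B : ℕ → ℝ := fun j => (-1:ℝ)^j * (2*(j:ℝ)) * (2*x)^(2*m+1+2-2*j) /
      ((j.factorial : ℝ) * ((2*m+1+2-2*j).factorial : ℝ)) with hB
    have hsplit : ∀ j ∈ Finset.range (m+2),
        (((2*m+1:ℕ):ℝ) + 2) * ((-1:ℝ)^j * (2*x)^(2*m+1+2-2*j) /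
            ((j.factorial : ℝ) * ((2*m+1+2-2*j).factorial : ℝ)))
        = 2*x * ((-1:ℝ)^j * (2*x)^(2*m+1+1-2*j) /
            ((j.factorial : ℝ) * ((2*m+1+1-2*j).factorial : ℝ))) + B j := by
      intro j hj
      simp only [Finset.mem_range] at hj
      obtain ⟨i, hi⟩ : ∃ i, m + 1 = j + i := ⟨m + 1 - j, by omega⟩
      have q1 : 2*m+1+2 - 2*j = 2*i+1 := by omega
      have q2 : 2*m+1+1 - 2*j = 2*i := by omega
      simp only [hB, q1, q2]
      have hc : ((2*m+1:ℕ):ℝ) + 2 = 2*(j:ℝ) + 2*(i:ℝ) + 1 := by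
        have := congrArg (Nat.cast : ℕ → ℝ) hi
        push_cast at this ⊢
        linarith
      have hf : ((2*i+1).factorial : ℝ) = ((2*i:ℝ)+1) * ((2*i).factorial : ℝ) := by
        exact_mod_cast congrArg Nat.cast (Nat.factorial_succ (2*i))
      rw [hc, hf]
      have h1 : (((2*i).factorial : ℕ) : ℝ) ≠ 0 := by exact_mod_cast (2*i).factorial_ne_zero
      have h2 : ((j.factorial : ℕ) : ℝ) ≠ 0 := by exact_mod_cast j.factorial_ne_zero
      field_simp
      ring
    rw [Finset.sum_congr rfl hsplit, Finset.sum_add_distrib]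
    have hBsum : (∑ j ∈ Finset.range (m+2), B j)
        = ∑ j ∈ Finset.range (m+1), ((-2) * ((-1:ℝ)^j * (2*x)^(2*m+1-2*j) /
            ((j.factorial : ℝ) * ((2*m+1-2*j).factorial : ℝ)))) := by
      rw [Finset.sum_range_succ' B (m+1)]
      have hB0 : B 0 = 0 := by simp [hB]
      rw [hB0, add_zero]
      refine Finset.sum_congr rfl ?_
      intro j hj
      have q1 : 2*m+1+2 - 2*(j+1) = 2*m+1 - 2*j := by omega
      simp only [hB, q1]
      have hf : (((j+1).factorial : ℕ) : ℝ) = ((j:ℝ)+1) * ((j.factorial : ℕ) : ℝ) := by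
        exact_mod_cast congrArg Nat.cast (Nat.factorial_succ j)
      rw [hf, pow_succ]
      have h2 : ((j.factorial : ℕ) : ℝ) ≠ 0 := by exact_mod_cast j.factorial_ne_zero
      have h3 : (((2*m+1-2*j).factorial : ℕ) : ℝ) ≠ 0 := by
        exact_mod_cast (2*m+1-2*j).factorial_ne_zero
      have hj1 : ((j:ℝ)+1) ≠ 0 := by positivity
      field_simp
      push_cast
      ring
    rw [hBsum, Finset.mul_sum, Finset.mul_sum, sub_eq_add_neg, ← Finset.sum_neg_distrib]
    congr 1
    exact Finset.sum_congr rfl (fun j _ => by ring)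

lemma hF_eq_T (m : ℕ) (x : ℝ) : hF m x = T m x := by
  have h : hermiteFn m x = (m.factorial : ℝ) * T m x := rfl
  have nz : ((m.factorial : ℕ):ℝ) ≠ 0 := by exact_mod_cast m.factorial_ne_zero
  rw [hF, h, mul_comm, mul_div_assoc, div_self nz, mul_one]


lemma hF_rec (n : ℕ) (x : ℝ) :
    hF (n+2) x = ((n:ℝ)+2)⁻¹ * (2 * x * hF (n+1) x - 2 * hF n x) := by
  have h := T_rec x n
  have nz : ((n:ℝ)+2) ≠ 0 := by positivity
  rw [hF_eq_T, hF_eq_T, hF_eq_T, inv_mul_eq_div, eq_div_iff nz]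
  linarith [h]

/- ### Scaled Charlier recurrence -/

lemma gF_rec (n : ℕ) {a : ℝ} (ha : 0 < a) (x : ℝ) :
    gF (n+2) a x = ((n:ℝ)+2)⁻¹ *
      ((2*x - ((n:ℝ)+1) * Real.sqrt (2/a)) * gF (n+1) a x - 2 * gF n a x) := by
  have ha' : a ≠ 0 := ne_of_gt ha
  have hE : (0:ℝ) < 2/a := by positivity
  set y : ℝ := Real.sqrt (2*a) * x + a with hy
  have hc := charlier_rec a y n
  have nz : ((n:ℝ)+2) ≠ 0 := by positivity
  have k1 : (2/a) ^ (((n:ℝ)+2)/2) = (2/a) ^ (((n:ℝ)+1)/2) * (2/a) ^ ((1:ℝ)/2) := by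
    rw [← Real.rpow_add hE]
    ring_nf
  have k2 : (2/a) ^ (((n:ℝ)+2)/2) = (2/a) ^ ((n:ℝ)/2) * (2/a) := by
    rw [show ((n:ℝ)+2)/2 = (n:ℝ)/2 + 1 from by ring, Real.rpow_add hE, Real.rpow_one]
  have k3 : (2/a) ^ ((1:ℝ)/2) = Real.sqrt (2/a) := (Real.sqrt_eq_rpow _).symm
  have k4 : Real.sqrt (2*a) * Real.sqrt (2/a) = 2 := by
    rw [← Real.sqrt_mul (by positivity : (0:ℝ) ≤ 2*a)]
    rw [show (2*a)*(2/a) = 4 from by field_simp; ring]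
    rw [show (4:ℝ) = 2^2 from by norm_num, Real.sqrt_sq (by norm_num : (0:ℝ) ≤ 2)]
  have k5 : (2/a) * a = 2 := by field_simp
  have g2 : gF (n+2) a x = (2/a) ^ (((n:ℝ)+2)/2) * charlierFn a (n+2) y := by
    rw [gF]
    push_cast
    rfl
  have g1 : gF (n+1) a x = (2/a) ^ (((n:ℝ)+1)/2) * charlierFn a (n+1) y := by
    rw [gF]
    push_cast
    rfl
  have g0 : gF n a x = (2/a) ^ ((n:ℝ)/2) * charlierFn a n y := rfl
  rw [g2, g1, g0, inv_mul_eq_div, eq_div_iff nz]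
  linear_combination ((2/a) ^ (((n:ℝ)+2)/2)) * hc
    + (charlierFn a (n+1) y * (Real.sqrt (2*a) * x - ((n:ℝ)+1))) * k1
    + (charlierFn a (n+1) y * (Real.sqrt (2*a) * x - ((n:ℝ)+1))
        * (2/a) ^ (((n:ℝ)+1)/2)) * k3
    + (x * (2/a) ^ (((n:ℝ)+1)/2) * charlierFn a (n+1) y) * k4
    - (a * charlierFn a n y) * k2
    - (charlierFn a n y * (2/a) ^ ((n:ℝ)/2)) * k5

/- ### Uniform convergence helpers -/

lemma tuo_of_eventually_eq {F : ℝ → ℝ → ℝ} {f : ℝ → ℝ} {K : Set ℝ}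
    (h : ∀ᶠ a in Filter.atTop, ∀ x ∈ K, F a x = f x) :
    TendstoUniformlyOn F f Filter.atTop K := by
  rw [Metric.tendstoUniformlyOn_iff]
  intro ε hε
  filter_upwards [h] with a ha x hx
  rw [ha x hx]
  simpa using hε

lemma hF_cont (m : ℕ) : Continuous (hF m) := by
  unfold hF hermiteFn
  apply Continuous.div_const
  apply Continuous.mul continuous_const
  apply continuous_finset_sum
  intro j _
  apply Continuous.div_const
  exact continuous_const.mul ((continuous_const.mul continuous_id).pow _)

/- ### Base cases -/

lemma base0 (K : Set ℝ) :
    TendstoUniformlyOn (fun a x => gF 0 a x) (hF 0) Filter.atTop K := by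
  apply tuo_of_eventually_eq
  filter_upwards with a x _
  have h1 : gF 0 a x = 1 := by
    simp [gF, charlierFn, Real.rpow_zero]
  have h2 : hF 0 x = 1 := by
    simp [hF, hermiteFn]
  rw [h1, h2]

lemma base1 (K : Set ℝ) :
    TendstoUniformlyOn (fun a x => gF 1 a x) (hF 1) Filter.atTop K := by
  apply tuo_of_eventually_eq
  filter_upwards [Filter.eventually_gt_atTop (0:ℝ)] with a ha x _
  have ha' : a ≠ 0 := ne_of_gt ha
  have hch : charlierFn a 1 (Real.sqrt (2*a) * x + a) = Real.sqrt (2*a) * x := by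
    simp [charlierFn, Finset.sum_range_succ]
  have h2 : hF 1 x = 2 * x := by
    simp [hF, hermiteFn]
  have k3 : (2/a) ^ ((1:ℝ)/2) = Real.sqrt (2/a) := (Real.sqrt_eq_rpow _).symm
  have k4 : Real.sqrt (2*a) * Real.sqrt (2/a) = 2 := by
    rw [← Real.sqrt_mul (by positivity : (0:ℝ) ≤ 2*a)]
    rw [show (2*a)*(2/a) = 4 from by field_simp; ring]
    rw [show (4:ℝ) = 2^2 from by norm_num, Real.sqrt_sq (by norm_num : (0:ℝ) ≤ 2)]
  have h1 : gF 1 a x = 2 * x := by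
    rw [gF, hch, Nat.cast_one, k3]
    calc Real.sqrt (2/a) * (Real.sqrt (2*a) * x)
        = (Real.sqrt (2*a) * Real.sqrt (2/a)) * x := by ring
      _ = 2 * x := by rw [k4]
  rw [h1, h2]

/- ### Inductive step -/

lemma step (n : ℕ) (K : Set ℝ) (hK : IsCompact K)
    (ih0 : TendstoUniformlyOn (fun a x => gF n a x) (hF n) Filter.atTop K)
    (ih1 : TendstoUniformlyOn (fun a x => gF (n+1) a x) (hF (n+1)) Filter.atTop K) :
    TendstoUniformlyOn (fun a x => gF (n+2) a x) (hF (n+2)) Filter.atTop K := by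
  rw [Metric.tendstoUniformlyOn_iff] at ih0 ih1 ⊢
  -- bounds on K
  obtain ⟨M0, hM0⟩ := hK.exists_bound_of_continuousOn continuous_id.continuousOn
  obtain ⟨H0, hH0⟩ := hK.exists_bound_of_continuousOn (hF_cont (n+1)).continuousOn
  set M : ℝ := max M0 0 with hM
  set H : ℝ := max H0 0 with hH
  have hMx : ∀ x ∈ K, |x| ≤ M := fun x hx =>
    le_trans (le_of_eq (Real.norm_eq_abs x).symm) (le_trans (hM0 x hx) (le_max_left _ _))
  have hHx : ∀ x ∈ K, |hF (n+1) x| ≤ H := fun x hx =>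
    le_trans (le_of_eq (Real.norm_eq_abs _).symm) (le_trans (hH0 x hx) (le_max_left _ _))
  have hMpos : 0 ≤ M := le_max_right _ _
  have hHpos : 0 ≤ H := le_max_right _ _
  intro ε hε
  set δ : ℝ := min 1 (ε / (2*M + H + 4)) with hδdef
  have hden : (0:ℝ) < 2*M + H + 4 := by linarith
  have hδpos : 0 < δ := lt_min one_pos (div_pos hε hden)
  have hδ1 : δ ≤ 1 := min_le_left _ _
  clear_value M H
  have hδε : δ * (2*M + H + 4) ≤ ε := by
    have : δ ≤ ε / (2*M + H + 4) := min_le_right _ _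
    calc δ * (2*M + H + 4) ≤ (ε / (2*M + H + 4)) * (2*M + H + 4) := by
          apply mul_le_mul_of_nonneg_right this (le_of_lt hden)
      _ = ε := by field_simp
  clear_value δ
  -- the vanishing term
  have hs0 : Filter.Tendsto (fun a : ℝ => ((n:ℝ)+1) * Real.sqrt (2/a))
      Filter.atTop (nhds 0) := by
    have h2a : Filter.Tendsto (fun a : ℝ => 2/a) Filter.atTop (nhds 0) :=
      Filter.Tendsto.div_atTop tendsto_const_nhds Filter.tendsto_id
    have hsq : Filter.Tendsto (fun a : ℝ => Real.sqrt (2/a)) Filter.atTop (nhds 0) := by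
      have h := (Real.continuous_sqrt.tendsto 0).comp h2a
      rw [Real.sqrt_zero] at h
      exact h
    have := hsq.const_mul ((n:ℝ)+1)
    simpa using this
  have hsmall : ∀ᶠ a in Filter.atTop, ((n:ℝ)+1) * Real.sqrt (2/a) < δ :=
    hs0.eventually_lt_const hδpos
  filter_upwards [ih0 δ hδpos, ih1 δ hδpos, hsmall,
    Filter.eventually_gt_atTop (0:ℝ)] with a h0 h1 hsm ha x hx
  have hrec := gF_rec n ha x
  have hhr := hF_rec n x
  set g1 := gF (n+1) a x
  set g0 := gF n a x
  set h1x := hF (n+1) x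
  set h0x := hF n x
  set s := Real.sqrt (2/a) with hs
  have hd1 : |g1 - h1x| ≤ δ := by
    have := h1 x hx
    rw [Real.dist_eq, abs_sub_comm] at this
    exact le_of_lt this
  have hd0 : |g0 - h0x| ≤ δ := by
    have := h0 x hx
    rw [Real.dist_eq, abs_sub_comm] at this
    exact le_of_lt this
  have hg1 : |g1| ≤ H + δ := by
    calc |g1| = |h1x + (g1 - h1x)| := by ring_nf
      _ ≤ |h1x| + |g1 - h1x| := abs_add_le _ _
      _ ≤ H + δ := add_le_add (hHx x hx) hd1
  have hsnn : 0 ≤ ((n:ℝ)+1) * s := by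
    have : (0:ℝ) ≤ s := Real.sqrt_nonneg _
    positivity
  have hsδ : ((n:ℝ)+1) * s ≤ δ := le_of_lt hsm
  have hdiff : gF (n+2) a x - hF (n+2) x
      = ((n:ℝ)+2)⁻¹ * (2*x*(g1 - h1x) - ((n:ℝ)+1)*s*g1 - 2*(g0 - h0x)) := by
    rw [hrec, hhr]
    ring
  have hNinv : ((n:ℝ)+2)⁻¹ ≤ 1 := by
    apply inv_le_one_of_one_le₀
    linarith [Nat.cast_nonneg (α := ℝ) n]
  have tsub : ∀ p q : ℝ, |p - q| ≤ |p| + |q| := by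
    intro p q
    rw [sub_eq_add_neg]
    exact (abs_add_le p (-q)).trans (by rw [abs_neg])
  have htri : |2*x*(g1 - h1x) - ((n:ℝ)+1)*s*g1 - 2*(g0 - h0x)|
      ≤ 2 * |x| * |g1 - h1x| + (((n:ℝ)+1)*s) * |g1| + 2 * |g0 - h0x| := by
    calc |2*x*(g1 - h1x) - ((n:ℝ)+1)*s*g1 - 2*(g0 - h0x)|
        ≤ |2*x*(g1 - h1x) - ((n:ℝ)+1)*s*g1| + |2*(g0 - h0x)| := tsub _ _
      _ ≤ |2*x*(g1 - h1x)| + |((n:ℝ)+1)*s*g1| + |2*(g0 - h0x)| := by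
          linarith [tsub (2*x*(g1 - h1x)) (((n:ℝ)+1)*s*g1)]
      _ = 2 * |x| * |g1 - h1x| + (((n:ℝ)+1)*s) * |g1| + 2 * |g0 - h0x| := by
          have e1 : |2*x*(g1 - h1x)| = 2 * |x| * |g1 - h1x| := by
            rw [abs_mul, abs_mul, abs_two]
          have e2 : |((n:ℝ)+1)*s*g1| = (((n:ℝ)+1)*s) * |g1| := by
            rw [abs_mul, abs_of_nonneg hsnn]
          have e3 : |2*(g0 - h0x)| = 2 * |g0 - h0x| := by
            rw [abs_mul, abs_two]
          rw [e1, e2, e3]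
  have hb1 : 2 * |x| * |g1 - h1x| ≤ 2*M*δ := by
    apply mul_le_mul
    · exact mul_le_mul_of_nonneg_left (hMx x hx) (by norm_num)
    · exact hd1
    · exact abs_nonneg _
    · positivity
  have hb2 : (((n:ℝ)+1)*s) * |g1| ≤ δ*(H+δ) := by
    apply mul_le_mul hsδ hg1 (abs_nonneg _) (le_of_lt hδpos)
  have hb3 : 2 * |g0 - h0x| ≤ 2*δ := by linarith
  have hfinal : |gF (n+2) a x - hF (n+2) x| < ε := by
    rw [hdiff, abs_mul]
    have habs : |((n:ℝ)+2)⁻¹| = ((n:ℝ)+2)⁻¹ := abs_of_nonneg (by positivity)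
    rw [habs]
    have hRnn : (0:ℝ) ≤ 2*M*δ + δ*(H+δ) + 2*δ := by positivity
    calc ((n:ℝ)+2)⁻¹ * |2*x*(g1 - h1x) - ((n:ℝ)+1)*s*g1 - 2*(g0 - h0x)|
        ≤ 1 * (2*M*δ + δ*(H+δ) + 2*δ) := by
          apply mul_le_mul hNinv (by linarith) (abs_nonneg _) (by norm_num)
      _ = 2*M*δ + δ*(H+δ) + 2*δ := by ring
      _ ≤ δ * (2*M + H + 3) := by
          nlinarith [mul_nonneg hδpos.le (sub_nonneg.mpr hδ1)]
      _ < δ * (2*M + H + 4) := by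
          have hlt : (2*M + H + 3 : ℝ) < 2*M + H + 4 := by linarith
          exact mul_lt_mul_of_pos_left hlt hδpos
      _ ≤ ε := hδε
  rw [Real.dist_eq, abs_sub_comm]
  exact hfinal

theorem charlier_to_hermite_limit (n : ℕ) (K : Set ℝ) (hK : IsCompact K) :
    TendstoUniformlyOn
      (fun (a : ℝ) (x : ℝ) =>
        (2 / a) ^ ((n : ℝ) / 2) * charlierFn a n (Real.sqrt (2 * a) * x + a))
      (fun x => hermiteFn n x / (n.factorial : ℝ))
      Filter.atTop K := by
  have main : ∀ m : ℕ, TendstoUniformlyOn (fun a x => gF m a x) (hF m) Filter.atTop K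
      ∧ TendstoUniformlyOn (fun a x => gF (m+1) a x) (hF (m+1)) Filter.atTop K := by
    intro m
    induction m with
    | zero => exact ⟨base0 K, base1 K⟩
    | succ k ih => exact ⟨ih.2, step k K hK ih.1 ih.2⟩
  exact (main n).1
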